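/- Suppose μ is a probability measure on sausages based at the origin with E_μ[head(S)·ℓ] = ∞. Then for every δ > 0 there exists ε > 0 such that under the i.i.d. concatenation law μ^⊗ℕ, the probability that the set of renewal levels in [0,u] has cardinality at least δu is at most exp{−εu} for all u ∈ ℕ. (Proof via truncation: choose k with E_μ[min{k, head(S)·ℓ}] ≥ 2/δ and apply the exponential Markov inequality to the truncated partial sums.) -/

import Mathlib

/-!
Statement 6: if μ is a probability law of sausage heights with infinite mean,
then under the i.i.d. concatenation law the probability that the renewal levels
(partial sums of the heights) number at least δu in [0,u] decays exponentially:
for every δ > 0 there is ε > 0 with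
P(∃ m ≥ δu with r_m = Σ_{i<m} H_i ≤ u) ≤ exp(−εu) for all u ∈ ℕ.
-/

open MeasureTheory ProbabilityTheory

private lemma exp_neg_le_quad {t : ℝ} (ht : 0 ≤ t) :
    Real.exp (-t) ≤ 1 - t + t ^ 2 := by
  have h1 : t / 2 + 1 ≤ Real.exp (t / 2) := Real.add_one_le_exp (t / 2)
  have h2 : (1 + t / 2) ^ 2 ≤ Real.exp t := by
    have hpos : (0:ℝ) < 1 + t / 2 := by linarith
    calc (1 + t / 2) ^ 2 ≤ (Real.exp (t / 2)) ^ 2 := by nlinarith [Real.exp_pos (t/2)]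
      _ = Real.exp t := by
          rw [sq, ← Real.exp_add]; ring_nf
  have hquad : 0 ≤ 1 - t + t ^ 2 := by nlinarith [sq_nonneg (t - 1)]
  have h3 : 1 ≤ (1 - t + t ^ 2) * Real.exp t := by
    have := mul_le_mul_of_nonneg_left h2 hquad
    nlinarith [this, sq_nonneg t]
  have hexp : (0:ℝ) < Real.exp t := Real.exp_pos t
  calc Real.exp (-t) = 1 / Real.exp t := by rw [Real.exp_neg, one_div]
    _ ≤ 1 - t + t ^ 2 := by rw [div_le_iff₀ hexp]; linarith

set_option maxHeartbeats 1000000 in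
theorem few_renewals_of_infinite_mean
    {Ω : Type*} [MeasurableSpace Ω] (P : Measure Ω) [IsProbabilityMeasure P]
    (H : ℕ → Ω → ℝ) (hmeas : ∀ i, Measurable (H i))
    (hindep : iIndepFun H P)
    (hident : ∀ i, P.map (H i) = P.map (H 0))
    (hnn : ∀ i ω, 0 ≤ H i ω)
    (hinf : ∫⁻ ω, ENNReal.ofReal (H 0 ω) ∂P = ⊤) :
    ∀ δ : ℝ, 0 < δ → ∃ ε : ℝ, 0 < ε ∧ ∀ u : ℕ,
      P {ω | ∃ m : ℕ, δ * u ≤ (m : ℝ) ∧ ∑ i ∈ Finset.range m, H i ω ≤ u}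
        ≤ ENNReal.ofReal (Real.exp (-ε * u)) := by
  intro δ hδ
  -- Step 1: choose a truncation level k with E[min(H₀, k)] ≥ 3/δ.
  have hmeas_min : ∀ (i : ℕ) (m : ℕ),
      Measurable (fun ω => ENNReal.ofReal (min (H i ω) m)) :=
    fun i m => ((hmeas i).min measurable_const).ennreal_ofReal
  have hmono : Monotone (fun (m : ℕ) (ω : Ω) => ENNReal.ofReal (min (H 0 ω) m)) := by
    intro a b hab ω
    exact ENNReal.ofReal_le_ofReal (min_le_min le_rfl (by exact_mod_cast hab))
  have hsup : ∀ ω, (⨆ m : ℕ, ENNReal.ofReal (min (H 0 ω) m)) = ENNReal.ofReal (H 0 ω) := by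
    intro ω
    apply le_antisymm
    · exact iSup_le fun m => ENNReal.ofReal_le_ofReal (min_le_left _ _)
    · have h0 : ENNReal.ofReal (H 0 ω) =
          ENNReal.ofReal (min (H 0 ω) (⌈H 0 ω⌉₊ : ℕ)) := by
        rw [min_eq_left (Nat.le_ceil _)]
      rw [h0]
      exact le_iSup (fun m : ℕ => ENNReal.ofReal (min (H 0 ω) m)) _
  have hlim : (⨆ m : ℕ, ∫⁻ ω, ENNReal.ofReal (min (H 0 ω) m) ∂P) = ⊤ := by
    rw [← lintegral_iSup (fun m => hmeas_min 0 m) hmono]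
    rw [lintegral_congr hsup]
    exact hinf
  obtain ⟨k₀, hk₀⟩ : ∃ m : ℕ,
      ENNReal.ofReal (3 / δ) < ∫⁻ ω, ENNReal.ofReal (min (H 0 ω) m) ∂P := by
    have h : ENNReal.ofReal (3 / δ) < ⨆ m : ℕ, ∫⁻ ω, ENNReal.ofReal (min (H 0 ω) m) ∂P := by
      rw [hlim]; exact ENNReal.ofReal_lt_top
    exact lt_iSup_iff.mp h
  set k : ℕ := max k₀ 1 with hkdef
  have hk1 : (1:ℝ) ≤ (k:ℝ) := by exact_mod_cast Nat.le_max_right k₀ 1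
  have hkpos : (0:ℝ) < (k:ℝ) := by linarith
  have hk : ENNReal.ofReal (3 / δ) ≤ ∫⁻ ω, ENNReal.ofReal (min (H 0 ω) k) ∂P := by
    refine hk₀.le.trans (lintegral_mono fun ω => ?_)
    refine ENNReal.ofReal_le_ofReal (min_le_min le_rfl ?_)
    exact_mod_cast Nat.le_max_left k₀ 1
  -- the truncated variables
  set X : ℕ → Ω → ℝ := fun i ω => min (H i ω) k with hXdef
  have hXmeas : ∀ i, Measurable (X i) := fun i => (hmeas i).min measurable_const
  have hXnn : ∀ i ω, 0 ≤ X i ω := fun i ω => le_min (hnn i ω) (by positivity)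
  have hXle : ∀ i ω, X i ω ≤ (k:ℝ) := fun i ω => min_le_right _ _
  have hXleH : ∀ i ω, X i ω ≤ H i ω := fun i ω => min_le_left _ _
  have hXint : ∀ i, Integrable (X i) P := by
    intro i
    refine (integrable_const (k:ℝ)).mono' (hXmeas i).aestronglyMeasurable ?_
    refine Filter.Eventually.of_forall fun ω => ?_
    rw [Real.norm_eq_abs, abs_le]
    exact ⟨by linarith [hXnn i ω], hXle i ω⟩
  -- finiteness of the truncated lintegral and the real bound
  have hfin : (∫⁻ ω, ENNReal.ofReal (min (H 0 ω) k) ∂P) ≠ ⊤ := by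
    have hle : (∫⁻ ω, ENNReal.ofReal (min (H 0 ω) k) ∂P)
        ≤ ∫⁻ _, ENNReal.ofReal (k:ℝ) ∂P :=
      lintegral_mono fun ω => ENNReal.ofReal_le_ofReal (min_le_right _ _)
    rw [lintegral_const, measure_univ, mul_one] at hle
    exact ne_top_of_le_ne_top ENNReal.ofReal_ne_top hle
  have hint_eq : ∫ ω, X 0 ω ∂P = (∫⁻ ω, ENNReal.ofReal (min (H 0 ω) k) ∂P).toReal := by
    exact integral_eq_lintegral_of_nonneg_ae
      (Filter.Eventually.of_forall fun ω => hXnn 0 ω) (hXmeas 0).aestronglyMeasurable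
  set EX : ℝ := ∫ ω, X 0 ω ∂P with hEXdef
  have hEX : 3 / δ ≤ EX := by
    rw [hint_eq]
    exact (ENNReal.ofReal_le_iff_le_toReal hfin).mp hk
  -- Step 2: choose s, ε
  set s : ℝ := 1 / ((δ + 1) * (k:ℝ) ^ 2) with hsdef
  have hs : 0 < s := by positivity
  set c : ℝ := s ^ 2 * (k:ℝ) ^ 2 with hcdef
  have hc : 0 ≤ c := by positivity
  have hskey : s * ((δ + 1) * (k:ℝ) ^ 2) = 1 := by
    rw [hsdef]; field_simp
  -- mgf bound for a single truncated variable
  have hmgf0 : mgf (X 0) P (-s) ≤ Real.exp (c - s * EX) := by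
    have hpt : ∀ ω, Real.exp (-s * X 0 ω) ≤ 1 - s * X 0 ω + c := by
      intro ω
      have h0 : 0 ≤ s * X 0 ω := mul_nonneg hs.le (hXnn 0 ω)
      have h1 : Real.exp (-(s * X 0 ω)) ≤ 1 - s * X 0 ω + (s * X 0 ω) ^ 2 :=
        exp_neg_le_quad h0
      have h2 : (s * X 0 ω) ^ 2 ≤ c := by
        rw [hcdef]
        have : s * X 0 ω ≤ s * (k:ℝ) := mul_le_mul_of_nonneg_left (hXle 0 ω) hs.le
        nlinarith [hXnn 0 ω, hs.le]
      calc Real.exp (-s * X 0 ω) = Real.exp (-(s * X 0 ω)) := by ring_nf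
        _ ≤ 1 - s * X 0 ω + (s * X 0 ω) ^ 2 := h1
        _ ≤ 1 - s * X 0 ω + c := by linarith
    have hint1 : Integrable (fun ω => Real.exp (-s * X 0 ω)) P := by
      refine (integrable_const (1:ℝ)).mono'
        (((hXmeas 0).const_mul (-s)).exp).aestronglyMeasurable ?_
      refine Filter.Eventually.of_forall fun ω => ?_
      rw [Real.norm_eq_abs, abs_of_pos (Real.exp_pos _)]
      rw [show (1:ℝ) = Real.exp 0 by simp]
      apply Real.exp_le_exp.mpr
      have := mul_nonneg hs.le (hXnn 0 ω)
      linarith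
    have hint2 : Integrable (fun ω => 1 - s * X 0 ω + c) P := by
      exact (((integrable_const (1:ℝ)).sub ((hXint 0).const_mul s)).add (integrable_const c))
    have hIle : mgf (X 0) P (-s) ≤ ∫ ω, (1 - s * X 0 ω + c) ∂P := by
      unfold mgf
      exact integral_mono hint1 hint2 fun ω => hpt ω
    have hIeq : ∫ ω, (1 - s * X 0 ω + c) ∂P = 1 - s * EX + c := by
      have h1 : ∫ ω, (1 - s * X 0 ω + c) ∂P = ∫ ω, ((1 + c) - s * X 0 ω) ∂P :=
        integral_congr_ae (Filter.Eventually.of_forall fun ω => by ring)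
      rw [h1, integral_sub (integrable_const _) ((hXint 0).const_mul s),
        integral_const, integral_const_mul, probReal_univ]
      simp only [ENNReal.toReal_one, smul_eq_mul, one_mul]
      ring
    have hfinal : 1 - s * EX + c ≤ Real.exp (c - s * EX) := by
      have := Real.add_one_le_exp (c - s * EX)
      linarith
    rw [hIeq] at hIle
    linarith
  -- identical distribution of the mgf's
  have hmgf_id : ∀ i, mgf (X i) P (-s) = mgf (X 0) P (-s) := by
    intro i
    have hg : Measurable (fun x : ℝ => Real.exp (-s * min x (k:ℝ))) :=
      ((measurable_id.min measurable_const).const_mul (-s)).exp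
    have hrw : ∀ j : ℕ, mgf (X j) P (-s)
        = ∫ x, Real.exp (-s * min x (k:ℝ)) ∂(P.map (H j)) := by
      intro j
      unfold mgf
      rw [integral_map (hmeas j).aemeasurable hg.aestronglyMeasurable]
    rw [hrw i, hrw 0, hident i]
  -- independence of the truncated variables
  have hXindep : iIndepFun X P := by
    have := hindep.comp (fun _ (x : ℝ) => min x (k:ℝ))
      (fun _ => measurable_id.min measurable_const)
    exact this
  have hmgf_nonneg : 0 ≤ mgf (X 0) P (-s) := mgf_nonneg
  refine ⟨s, hs, ?_⟩
  intro u
  rcases Nat.eq_zero_or_pos u with hu0 | hu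
  · subst hu0
    simp only [Nat.cast_zero, mul_zero, Real.exp_zero, ENNReal.ofReal_one]
    exact prob_le_one
  have hu1 : (1:ℝ) ≤ (u:ℝ) := by exact_mod_cast hu
  set n : ℕ := ⌈δ * (u:ℝ)⌉₊ with hndef
  have hn1 : δ * (u:ℝ) ≤ (n:ℝ) := Nat.le_ceil _
  have hn2 : (n:ℝ) ≤ δ * (u:ℝ) + 1 := (Nat.ceil_lt_add_one (by positivity)).le
  -- event inclusion
  have hsub : {ω | ∃ m : ℕ, δ * u ≤ (m : ℝ) ∧ ∑ i ∈ Finset.range m, H i ω ≤ u}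
      ⊆ {ω | (∑ i ∈ Finset.range n, X i) ω ≤ (u:ℝ)} := by
    rintro ω ⟨m, hm1, hm2⟩
    have hnm : n ≤ m := Nat.ceil_le.mpr hm1
    simp only [Set.mem_setOf_eq, Finset.sum_apply]
    calc ∑ i ∈ Finset.range n, X i ω
        ≤ ∑ i ∈ Finset.range n, H i ω :=
          Finset.sum_le_sum fun i _ => hXleH i ω
      _ ≤ ∑ i ∈ Finset.range m, H i ω :=
          Finset.sum_le_sum_of_subset_of_nonneg
            (Finset.range_subset_range.mpr hnm) (fun i _ _ => hnn i ω)
      _ ≤ u := hm2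
  -- Chernoff bound
  have hSmeas : Measurable (fun ω => ∑ i ∈ Finset.range n, X i ω) :=
    Finset.measurable_sum _ fun i _ => hXmeas i
  have hSnn : ∀ ω, 0 ≤ ∑ i ∈ Finset.range n, X i ω :=
    fun ω => Finset.sum_nonneg fun i _ => hXnn i ω
  have hSeq : (∑ i ∈ Finset.range n, X i) = (fun ω => ∑ i ∈ Finset.range n, X i ω) := by
    funext ω; simp [Finset.sum_apply]
  have hSint : Integrable (fun ω => Real.exp (-s * (∑ i ∈ Finset.range n, X i) ω)) P := by
    simp only [hSeq]
    refine (integrable_const (1:ℝ)).mono' ?_ ?_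
    · exact ((hSmeas.const_mul (-s)).exp).aestronglyMeasurable
    · refine Filter.Eventually.of_forall fun ω => ?_
      rw [Real.norm_eq_abs, abs_of_pos (Real.exp_pos _)]
      rw [show (1:ℝ) = Real.exp 0 by simp]
      apply Real.exp_le_exp.mpr
      have h1 : 0 ≤ ∑ i ∈ Finset.range n, X i ω := hSnn ω
      nlinarith [hs.le]
  have hcher := measure_le_le_exp_mul_mgf (μ := P) (X := ∑ i ∈ Finset.range n, X i)
    ((u:ℝ)) (t := -s) (neg_nonpos.mpr hs.le) hSint
  -- product structure of the mgf
  have hprod : mgf (∑ i ∈ Finset.range n, X i) P (-s)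
      = (mgf (X 0) P (-s)) ^ n := by
    rw [hXindep.mgf_sum hXmeas (Finset.range n)]
    rw [Finset.prod_congr rfl fun i _ => hmgf_id i]
    simp
  have hpow : (mgf (X 0) P (-s)) ^ n ≤ Real.exp ((n:ℝ) * (c - s * EX)) := by
    calc (mgf (X 0) P (-s)) ^ n ≤ (Real.exp (c - s * EX)) ^ n :=
          pow_le_pow_left₀ hmgf_nonneg hmgf0 n
      _ = Real.exp ((n:ℝ) * (c - s * EX)) := by rw [← Real.exp_nat_mul]
  -- arithmetic: the exponent is at most -s*u
  have harith : Real.exp (-(-s) * (u:ℝ)) * Real.exp ((n:ℝ) * (c - s * EX))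
      ≤ Real.exp (-s * (u:ℝ)) := by
    rw [← Real.exp_add]
    apply Real.exp_le_exp.mpr
    have hnn0 : (0:ℝ) ≤ (n:ℝ) := Nat.cast_nonneg n
    have h1 : 3 * (s * (u:ℝ)) ≤ (n:ℝ) * (s * EX) := by
      have hEXnn : 0 ≤ EX := le_trans (by positivity) hEX
      have ha : 3 * (u:ℝ) ≤ (n:ℝ) * EX := by
        have hb : (δ * (u:ℝ)) * (3 / δ) ≤ (n:ℝ) * EX :=
          mul_le_mul hn1 hEX (by positivity) hnn0
        calc 3 * (u:ℝ) = (δ * (u:ℝ)) * (3 / δ) := by field_simp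
          _ ≤ (n:ℝ) * EX := hb
      nlinarith [hs.le]
    have h2 : (n:ℝ) * c ≤ s * (u:ℝ) := by
      have ha : (n:ℝ) ≤ (δ + 1) * (u:ℝ) := by nlinarith
      have hb : (n:ℝ) * c ≤ (δ + 1) * (u:ℝ) * c :=
        mul_le_mul_of_nonneg_right ha hc
      have hcval : (δ + 1) * (u:ℝ) * c = s * (u:ℝ) := by
        rw [hcdef]
        calc (δ + 1) * (u:ℝ) * (s ^ 2 * (k:ℝ) ^ 2)
            = (s * (u:ℝ)) * (s * ((δ + 1) * (k:ℝ) ^ 2)) := by ring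
          _ = s * (u:ℝ) := by rw [hskey, mul_one]
      linarith
    nlinarith
  -- conclusion
  refine le_trans (measure_mono hsub) ?_
  rw [ENNReal.le_ofReal_iff_toReal_le (measure_ne_top P _) (Real.exp_pos _).le]
  calc (P {ω | (∑ i ∈ Finset.range n, X i) ω ≤ (u:ℝ)}).toReal
      ≤ Real.exp (-(-s) * (u:ℝ)) * mgf (∑ i ∈ Finset.range n, X i) P (-s) := hcher
    _ ≤ Real.exp (-(-s) * (u:ℝ)) * Real.exp ((n:ℝ) * (c - s * EX)) := by
        apply mul_le_mul_of_nonneg_left _ (Real.exp_pos _).le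
        rw [hprod]; exact hpow
    _ ≤ Real.exp (-s * (u:ℝ)) := harith
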